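/- arXiv:math/0306044 — 2 statements merged into one kernel-verified Lean document; each statement's English description precedes it below -/
import Mathlib

section
/- Every FODC (d, Ω) over R determines a faithful right Cartan pair: letting Ω* = Hom_{-R}(Ω, R) (right R-module maps) with bimodule structure (aXb)(ω) = a·X(bω), the map ρ_d: Ω* → End_k(R) given by ρ_d(X)(r) = X(dr) satisfies ρ_d(aX) = a·ρ_d(X), the twisted Leibniz rule ρ_d(X)(rs) = ρ_d(X)(r)·s + ρ_d(X·r)(s), and is injective. -/
open TensorProduct MulOpposite

/-- Every FODC `(d, Ω)` over `R` determines a faithful right Cartan pair: on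
`Ω* = Hom_{-R}(Ω, R)` (right `R`-module maps, i.e. `k`-linear maps `X` with
`X(ω·b) = X(ω)·b`), the map `ρ_d(X)(r) = X(d r)` satisfies `ρ_d(a·X) = a·ρ_d(X)`,
the twisted Leibniz rule `ρ_d(X)(rs) = ρ_d(X)(r)·s + ρ_d(X·r)(s)` (where
`(X·r)(ω) = X(r·ω)`), and is injective on right `R`-linear maps. -/
theorem fodc_gives_faithful_cartan_pair (k R Ω : Type*) [Field k] [Ring R] [Algebra k R]
    [AddCommGroup Ω] [Module k Ω] [Module (R ⊗[k] Rᵐᵒᵖ) Ω]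
    [IsScalarTower k (R ⊗[k] Rᵐᵒᵖ) Ω]
    (d : R →ₗ[k] Ω)
    (hd : ∀ a b : R, d (a * b) =
      (a ⊗ₜ[k] (1 : Rᵐᵒᵖ)) • d b + ((1 : R) ⊗ₜ[k] op b) • d a)
    (hgen : Submodule.span (R ⊗[k] Rᵐᵒᵖ) (Set.range d) = ⊤) :
    -- `ρ_d` is a left `R`-module map: `ρ_d(a·X)(r) = a·ρ_d(X)(r)`
    (∀ (X : Ω →ₗ[k] R) (a r : R),
      ((LinearMap.mul k R a) ∘ₗ X) (d r) = a * X (d r)) ∧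
    -- twisted Leibniz rule: `ρ_d(X)(rs) = ρ_d(X)(r)·s + ρ_d(X·r)(s)`
    (∀ X : Ω →ₗ[k] R, (∀ (b : R) (ω : Ω), X (((1 : R) ⊗ₜ[k] op b) • ω) = X ω * b) →
      ∀ r s : R, X (d (r * s)) = X (d r) * s + X ((r ⊗ₜ[k] (1 : Rᵐᵒᵖ)) • d s)) ∧
    -- faithfulness: `ρ_d` is injective on right `R`-module maps
    (∀ X Y : Ω →ₗ[k] R,
      (∀ (b : R) (ω : Ω), X (((1 : R) ⊗ₜ[k] op b) • ω) = X ω * b) →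
      (∀ (b : R) (ω : Ω), Y (((1 : R) ⊗ₜ[k] op b) • ω) = Y ω * b) →
      (∀ r : R, X (d r) = Y (d r)) → X = Y) := by
  refine ⟨fun X a r => rfl, fun X hX r s => ?_, fun X Y hX hY hXY => ?_⟩
  · rw [hd r s, map_add, hX]
    exact add_comm _ _
  · -- difference map
    set Z : Ω →ₗ[k] R := X - Y with hZ
    have hZr : ∀ (b : R) (ω : Ω), Z (((1 : R) ⊗ₜ[k] op b) • ω) = Z ω * b := by
      intro b ω
      simp [hZ, hX b ω, hY b ω, sub_mul]
    have hZd : ∀ r : R, Z (d r) = 0 := by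
      intro r; simp [hZ, hXY r]
    -- Z vanishes on (a ⊗ 1) • d r
    have key1 : ∀ a r : R, Z ((a ⊗ₜ[k] (1 : Rᵐᵒᵖ)) • d r) = 0 := by
      intro a r
      have h := hd a r
      have : (a ⊗ₜ[k] (1 : Rᵐᵒᵖ)) • d r = d (a * r) - ((1 : R) ⊗ₜ[k] op r) • d a := by
        rw [h]; abel
      rw [this, map_sub, hZd, hZr, hZd, zero_mul, sub_zero]
    -- Z vanishes on (a ⊗ op b) • d r
    have key2 : ∀ (a b r : R), Z ((a ⊗ₜ[k] op b) • d r) = 0 := by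
      intro a b r
      have h1 : (a ⊗ₜ[k] op b : R ⊗[k] Rᵐᵒᵖ)
          = ((1 : R) ⊗ₜ[k] op b) * (a ⊗ₜ[k] (1 : Rᵐᵒᵖ)) := by
        simp [Algebra.TensorProduct.tmul_mul_tmul]
      rw [h1, mul_smul, hZr, key1, zero_mul]
    -- hence vanishes on all elementary smuls of elements of the span
    have main : ∀ ω : Ω, ω ∈ Submodule.span (R ⊗[k] Rᵐᵒᵖ) (Set.range d) →
        ∀ c : R ⊗[k] Rᵐᵒᵖ, Z (c • ω) = 0 := by
      intro ω hω
      induction hω using Submodule.span_induction with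
      | mem x hx =>
        obtain ⟨r, rfl⟩ := hx
        intro c
        induction c using TensorProduct.induction_on with
        | zero => exact (congrArg Z (zero_smul (R ⊗[k] Rᵐᵒᵖ) (d r))).trans (map_zero Z)
        | tmul a b =>
          induction b using MulOpposite.rec' with
          | h b => exact key2 a b r
        | add c₁ c₂ h₁ h₂ => rw [add_smul, map_add, h₁, h₂, add_zero]
      | zero => simp
      | add x y _ _ h₁ h₂ => intro c; rw [smul_add, map_add, h₁ c, h₂ c, add_zero]
      | smul c' x _ h => intro c; rw [smul_smul]; exact h _
    have : ∀ ω : Ω, Z ω = 0 := by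
      intro ω
      have := main ω (by rw [hgen]; trivial) 1
      simpa using this
    have hZ0 : Z = 0 := LinearMap.ext this
    have := sub_eq_zero.mp hZ0
    exact this
end

section
/- Let H be a Hopf algebra such that the algebra homomorphisms Alg(H,k) separate points of H. For D ∈ End_k(H), the condition D = (id⊗ε)∘(id⊗D)∘Δ holds if and only if D∘L = L∘D for every translation L = (φ⊗id)∘Δ with φ ∈ Alg(H,k). -/
open TensorProduct

section Aux

open Coalgebra

variable {k H : Type*} [Field k] [Ring H] [HopfAlgebra k H]

/-- The translation associated to `φ`. -/
noncomputable def Lmap (φ : H →ₐ[k] k) : H →ₗ[k] H :=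
  (TensorProduct.lid k H).toLinearMap ∘ₗ (LinearMap.rTensor H φ.toLinearMap) ∘ₗ Coalgebra.comul

/-- The operator `a ↦ a₁ ε(D a₂)`. -/
noncomputable def Emap (D : H →ₗ[k] H) : H →ₗ[k] H :=
  (TensorProduct.rid k H).toLinearMap ∘ₗ
    (LinearMap.lTensor H (Coalgebra.counit ∘ₗ D)) ∘ₗ Coalgebra.comul

lemma Lmap_apply (φ : H →ₐ[k] k) (a : H) (r : Coalgebra.Repr k a (H × H)) :
    Lmap φ a = ∑ i ∈ r.index, φ (r.left i) • r.right i := by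
  simp only [Lmap, LinearMap.comp_apply, ← r.eq, map_sum, LinearMap.rTensor_tmul,
    LinearEquiv.coe_coe, TensorProduct.lid_tmul, AlgHom.toLinearMap_apply]

lemma Emap_apply (D : H →ₗ[k] H) (a : H) (r : Coalgebra.Repr k a (H × H)) :
    Emap D a = ∑ i ∈ r.index, Coalgebra.counit (R := k) (D (r.right i)) • r.left i := by
  simp only [Emap, LinearMap.comp_apply, ← r.eq, map_sum, LinearMap.lTensor_tmul,
    LinearEquiv.coe_coe, TensorProduct.rid_tmul]

lemma sum_counit_smul (a : H) (r : Coalgebra.Repr k a (H × H)) :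
    ∑ i ∈ r.index, Coalgebra.counit (R := k) (r.right i) • r.left i = a := by
  have h := Coalgebra.sum_tmul_counit_eq (R := k) r
  have h2 := congrArg (TensorProduct.rid k H) h
  rw [map_sum] at h2
  simp only [TensorProduct.rid_tmul, one_smul] at h2
  exact h2

lemma counit_Lmap (φ : H →ₐ[k] k) (a : H) :
    Coalgebra.counit (R := k) (Lmap φ a) = φ a := by
  obtain r := Coalgebra.Repr.arbitrary k a
  rw [Lmap_apply φ a r, map_sum]
  have := congrArg φ (sum_counit_smul a r)
  simp only [map_sum, map_smul, smul_eq_mul] at this ⊢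
  rw [← this]
  exact Finset.sum_congr rfl fun i _ => mul_comm _ _

end Aux

/-- If the algebra maps `H → k` separate the points of the Hopf algebra `H`, then for
`D ∈ End_k(H)` the condition `D = (id⊗ε)∘(id⊗D)∘Δ` holds iff `D` commutes with every
translation `L_φ = (φ⊗id)∘Δ`, `φ ∈ Alg(H,k)`. -/
theorem invariance_iff_commutes_with_translations (k H : Type*) [Field k] [Ring H]
    [HopfAlgebra k H]
    (hsep : ∀ a b : H, a ≠ b → ∃ φ : H →ₐ[k] k, φ a ≠ φ b)
    (D : H →ₗ[k] H) :
    ((TensorProduct.rid k H).toLinearMap ∘ₗ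
        (LinearMap.lTensor H (Coalgebra.counit ∘ₗ D)) ∘ₗ Coalgebra.comul = D) ↔
    (∀ φ : H →ₐ[k] k,
      D ∘ₗ ((TensorProduct.lid k H).toLinearMap ∘ₗ
          (LinearMap.rTensor H φ.toLinearMap) ∘ₗ Coalgebra.comul) =
        ((TensorProduct.lid k H).toLinearMap ∘ₗ
          (LinearMap.rTensor H φ.toLinearMap) ∘ₗ Coalgebra.comul) ∘ₗ D) := by
  have hL : ∀ φ : H →ₐ[k] k,
      ((TensorProduct.lid k H).toLinearMap ∘ₗ
        (LinearMap.rTensor H φ.toLinearMap) ∘ₗ Coalgebra.comul) = Lmap φ := fun _ => rfl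
  have hE : ((TensorProduct.rid k H).toLinearMap ∘ₗ
      (LinearMap.lTensor H (Coalgebra.counit ∘ₗ D)) ∘ₗ Coalgebra.comul) = Emap D := rfl
  rw [hE]
  simp only [hL]
  constructor
  · -- forward: `D = E` implies `D` commutes with translations
    intro h φ
    rw [← h]
    ext a
    simp only [LinearMap.comp_apply]
    obtain r := Coalgebra.Repr.arbitrary k a
    set r₁ : (i : H × H) → Coalgebra.Repr k (r.left i) (H × H) :=
      fun i => Coalgebra.Repr.arbitrary k (r.left i) with hr₁
    set r₂ : (i : H × H) → Coalgebra.Repr k (r.right i) (H × H) :=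
      fun i => Coalgebra.Repr.arbitrary k (r.right i) with hr₂
    have base := Coalgebra.sum_tmul_tmul_eq (R := k) r r₁ r₂
    set G : H ⊗[k] (H ⊗[k] H) →ₗ[k] H :=
      (TensorProduct.lid k H).toLinearMap ∘ₗ (LinearMap.rTensor H φ.toLinearMap) ∘ₗ
        LinearMap.lTensor H ((TensorProduct.rid k H).toLinearMap ∘ₗ
          LinearMap.lTensor H (Coalgebra.counit ∘ₗ D)) with hG
    have key2 := congrArg G base
    have hGt : ∀ (x y z : H), G (x ⊗ₜ (y ⊗ₜ z)) =
        φ x • Coalgebra.counit (R := k) (D z) • y := by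
      intro x y z
      simp [hG, TensorProduct.rid_tmul, TensorProduct.lid_tmul]
      exact smul_comm _ _ _
    simp only [map_sum, hGt] at key2
    -- compute both sides
    rw [Lmap_apply φ a r, Emap_apply D a r, map_sum, map_sum]
    have hEL : ∀ i ∈ r.index, Emap D (φ (r.left i) • r.right i) =
        ∑ j ∈ (r₂ i).index,
          φ (r.left i) • Coalgebra.counit (R := k) (D ((r₂ i).right j)) • (r₂ i).left j := by
      intro i _
      rw [map_smul, Emap_apply D (r.right i) (r₂ i), Finset.smul_sum]
    have hLE : ∀ i ∈ r.index,
        Lmap φ (Coalgebra.counit (R := k) (D (r.right i)) • r.left i) =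
        ∑ j ∈ (r₁ i).index,
          φ ((r₁ i).left j) • Coalgebra.counit (R := k) (D (r.right i)) • (r₁ i).right j := by
      intro i _
      rw [map_smul, Lmap_apply φ (r.left i) (r₁ i), Finset.smul_sum]
      exact Finset.sum_congr rfl fun j _ => smul_comm _ _ _
    rw [Finset.sum_congr rfl hEL, Finset.sum_congr rfl hLE]
    exact key2.symm
  · -- backward: separation of points
    intro h
    ext a
    by_contra hne
    obtain ⟨φ, hφ⟩ := hsep _ _ hne
    apply hφ
    obtain r := Coalgebra.Repr.arbitrary k a
    have h1 : φ (Emap D a) =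
        ∑ i ∈ r.index, Coalgebra.counit (R := k) (D (r.right i)) * φ (r.left i) := by
      rw [Emap_apply D a r, map_sum]
      simp [smul_eq_mul]
    have h2 : φ (D a) = Coalgebra.counit (R := k) (D (Lmap φ a)) := by
      have := LinearMap.congr_fun (h φ) a
      simp only [LinearMap.comp_apply] at this
      rw [← counit_Lmap φ (D a), ← this]
    rw [h1, h2, Lmap_apply φ a r, map_sum, map_sum]
    simp only [map_smul, smul_eq_mul]
    exact Finset.sum_congr rfl fun i _ => mul_comm _ _
end
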